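/- For each nonnegative integer k, let a_k be the unique solution of 2πk = 2πβ·sqrt(1 - (1/(2πβ))²) - arccos(1/(2πβ)) and set y_k = k/a_k + (1/(2πa_k))·arccos(1/(2πa_k)). Then the pair (a_k, y_k) satisfies y_k = sin(2πa_k y_k) and 2πa_k·cos(2πa_k y_k) = 1. -/

import Mathlib

open Real

theorem stmt_14 (k : ℕ) (a y : ℝ)
    (ha : 1 / (2 * π) ≤ a ∧
      2 * π * k = 2 * π * a * Real.sqrt (1 - (1 / (2 * π * a)) ^ 2)
        - Real.arccos (1 / (2 * π * a)))
    (hy : y = k / a + 1 / (2 * π * a) * Real.arccos (1 / (2 * π * a))) :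
    y = Real.sin (2 * π * a * y) ∧ 2 * π * a * Real.cos (2 * π * a * y) = 1 := by
  obtain ⟨ha1, ha2⟩ := ha
  have hπ : (0:ℝ) < π := Real.pi_pos
  have ha0 : 0 < a := lt_of_lt_of_le (by positivity) ha1
  set c : ℝ := 1 / (2 * π * a) with hc
  have h2πa : (1:ℝ) ≤ 2 * π * a := by
    rw [div_le_iff₀ (by positivity)] at ha1
    linarith [ha1]
  have hc1 : c ≤ 1 := by
    rw [hc, div_le_one (by positivity)]; exact h2πa
  have hc0 : 0 < c := by positivity
  have hcos : Real.cos (Real.arccos c) = c := Real.cos_arccos (by linarith) hc1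
  have hsin : Real.sin (Real.arccos c) = Real.sqrt (1 - c ^ 2) := by
    rw [Real.sin_arccos, sq]
  have key : 2 * π * a * y = 2 * π * k + Real.arccos c := by
    have h2 : (2:ℝ) * π * a ≠ 0 := by positivity
    rw [hy, hc]; field_simp
  have hy' : y = Real.sqrt (1 - c ^ 2) := by
    have : 2 * π * a * y = 2 * π * a * Real.sqrt (1 - c ^ 2) := by
      rw [key]; linarith [ha2]
    exact mul_left_cancel₀ (by positivity) this
  constructor
  · rw [key]
    have : (2:ℝ) * π * k + Real.arccos c = Real.arccos c + k * (2 * π) := by ring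
    rw [this, Real.sin_add_nat_mul_two_pi, hsin, hy']
  · rw [key]
    have : (2:ℝ) * π * k + Real.arccos c = Real.arccos c + k * (2 * π) := by ring
    rw [this, Real.cos_add_nat_mul_two_pi, hcos, hc]
    field_simp
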